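/- Suppose a group-valued homogeneous measure λ: 𝔹 → G has the Rokhlin property and the top element 1 admits two equi-measured N-partitions (N > 1) with common measures α and β respectively. Then α = β. -/

import Mathlib

variable {B : Type*} [BooleanAlgebra B] {S : Type*} [AddCommMonoid S]

/-- An `S`-valued finitely additive measure on the Boolean algebra `B`. -/
def IsBAMeasure (μ : B → S) : Prop :=
  μ ⊥ = 0 ∧ ∀ a b : B, Disjoint a b → μ (a ⊔ b) = μ a + μ b

/-- An element is proper if it differs from `⊥` and `⊤`. -/
def IsProperElem (a : B) : Prop := a ≠ ⊥ ∧ a ≠ ⊤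

/-- `{a, b, c}` is a partition of `B` into three nonzero pairwise disjoint pieces. -/
def IsPartition3 (a b c : B) : Prop :=
  a ≠ ⊥ ∧ b ≠ ⊥ ∧ c ≠ ⊥ ∧ Disjoint a b ∧ Disjoint a c ∧ Disjoint b c ∧ a ⊔ b ⊔ c = ⊤

/-- A Boolean automorphism `φ` preserves the measure `μ`. -/
def PreservesMeas (μ : B → S) (φ : B ≃o B) : Prop := ∀ x : B, μ (φ x) = μ x

/-- `μ` is homogeneous: every partial `μ`-isomorphism on a 4-element subalgebra
(equivalently, determined by proper `a ↦ b` with `μ a = μ b`, `μ aᶜ = μ bᶜ`)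
extends to a `μ`-automorphism. -/
def MeasHomogeneous (μ : B → S) : Prop :=
  ∀ a b : B, IsProperElem a → IsProperElem b → μ a = μ b → μ aᶜ = μ bᶜ →
    ∃ φ : B ≃o B, PreservesMeas μ φ ∧ φ a = b

/-- The 4 elements property (4EP). -/
def MeasHas4EP (μ : B → S) : Prop :=
  ∀ a b c d : B, IsPartition3 a b c → μ a + μ b = μ d → μ c = μ dᶜ →
    ∃ p q : B, IsProperElem p ∧ IsProperElem q ∧ Disjoint p q ∧
      μ p = μ a ∧ μ q = μ b ∧ p ⊔ q = d

/-- The trinary spectrum of a measure. -/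
def TrinarySpectrum (μ : B → S) : Set (S × S × S) :=
  {t | ∃ a b c : B, IsPartition3 a b c ∧ t = (μ a, μ b, μ c)}

/-- `Aut(μ)` has a dense conjugacy class (Rokhlin property). -/
def RokhlinProperty (μ : B → S) : Prop :=
  ∃ h : B ≃o B, PreservesMeas μ h ∧
    ∀ g : B ≃o B, PreservesMeas μ g → ∀ F : Finset B,
      ∃ u : B ≃o B, PreservesMeas μ u ∧
        ∀ x ∈ F, u (h (u.symm x)) = g x ∧ u (h.symm (u.symm x)) = g.symm x

/-- `j` admits an equi-measured `N`-partition with common measure `c`. -/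
def AdmitsEquiPartitionWith (μ : B → S) (N : ℕ) (j : B) (c : S) : Prop :=
  ∃ b : Fin N → B, (∀ i, b i ≠ ⊥) ∧ (∀ i k : Fin N, i ≠ k → Disjoint (b i) (b k)) ∧
    Finset.univ.sup b = j ∧ ∀ i, μ (b i) = c

set_option linter.unusedSectionVars false
set_option linter.unusedVariables false
set_option linter.unnecessarySimpa false

namespace Stmt18
open Finset
open scoped Classical

noncomputable section

variable {G : Type*} [AddCommGroup G]

lemma oi_disjoint_iff (φ : B ≃o B) {a b : B} : Disjoint (φ a) (φ b) ↔ Disjoint a b := by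
  simp only [disjoint_iff, ← OrderIso.map_inf]
  exact ⟨fun h => by have := congrArg φ.symm h; simpa using this,
         fun h => by rw [h]; exact φ.map_bot⟩

lemma oi_ne_bot (φ : B ≃o B) {a : B} (ha : a ≠ ⊥) : φ a ≠ ⊥ := by
  intro h
  exact ha (by simpa using congrArg φ.symm h)

lemma pres_symm {lam : B → G} {φ : B ≃o B} (h : PreservesMeas lam φ) :
    PreservesMeas lam φ.symm := by
  intro x
  have := h (φ.symm x)
  rw [φ.apply_symm_apply] at this
  exact this.symm

lemma meas_compl {lam : B → G} (hlam : IsBAMeasure lam) (x : B) :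
    lam xᶜ = lam ⊤ - lam x := by
  have h := hlam.2 x xᶜ disjoint_compl_right
  rw [sup_compl_eq_top] at h
  rw [h]; abel

lemma meas_finset_sup {lam : B → G} (hlam : IsBAMeasure lam) {ι : Type*}
    (t : Finset ι) (g : ι → B)
    (hd : ∀ i ∈ t, ∀ j ∈ t, i ≠ j → Disjoint (g i) (g j)) :
    lam (t.sup g) = ∑ i ∈ t, lam (g i) := by
  classical
  induction t using Finset.induction_on with
  | empty => simpa using hlam.1
  | @insert a s ha ih =>
    rw [Finset.sup_insert, Finset.sum_insert ha]
    have hdis : Disjoint (g a) (s.sup g) := by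
      rw [Finset.disjoint_sup_right]
      intro i hi
      exact hd a (Finset.mem_insert_self a s) i (Finset.mem_insert_of_mem hi)
        (by rintro rfl; exact ha hi)
    rw [hlam.2 _ _ hdis, ih (fun i hi j hj hij =>
      hd i (Finset.mem_insert_of_mem hi) j (Finset.mem_insert_of_mem hj) hij)]

variable (lam : B → G)

/-- A valid "partial isomorphism" state: both coordinates form partitions of `⊤`
into nonzero pieces, matched in measure. -/
def Valid (s : Finset (B × B)) : Prop :=
  (∀ p ∈ s, p.1 ≠ ⊥ ∧ p.2 ≠ ⊥ ∧ lam p.1 = lam p.2) ∧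
  (∀ p ∈ s, ∀ q ∈ s, p ≠ q → Disjoint p.1 q.1 ∧ Disjoint p.2 q.2) ∧
  s.sup Prod.fst = ⊤ ∧ s.sup Prod.snd = ⊤

def Refines (s t : Finset (B × B)) : Prop := ∀ q ∈ t, ∃ p ∈ s, q.1 ≤ p.1 ∧ q.2 ≤ p.2

def SpanF (x : B) (s : Finset (B × B)) : Prop := ∀ q ∈ s, q.1 ≤ x ∨ Disjoint q.1 x

def SpanS (y : B) (s : Finset (B × B)) : Prop := ∀ q ∈ s, q.2 ≤ y ∨ Disjoint q.2 y

def phiAt (s : Finset (B × B)) (x : B) : B := (s.filter (fun p => p.1 ≤ x)).sup Prod.snd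

def psiAt (s : Finset (B × B)) (y : B) : B := (s.filter (fun p => p.2 ≤ y)).sup Prod.fst

def sw (s : Finset (B × B)) : Finset (B × B) := s.image Prod.swap

lemma mem_sw {s : Finset (B × B)} {q : B × B} : q ∈ sw s ↔ q.swap ∈ s := by
  constructor
  · intro h
    obtain ⟨p, hp, rfl⟩ := Finset.mem_image.1 h
    simpa using hp
  · intro h
    exact Finset.mem_image.2 ⟨q.swap, h, by simp⟩

lemma sw_sw (s : Finset (B × B)) : sw (sw s) = s := by
  ext q; simp [mem_sw]

lemma valid_sw {s : Finset (B × B)} (hs : Valid lam s) : Valid lam (sw s) := by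
  obtain ⟨h1, h2, h3, h4⟩ := hs
  refine ⟨?_, ?_, ?_, ?_⟩
  · intro p hp
    obtain ⟨hb1, hb2, hm⟩ := h1 p.swap (mem_sw.1 hp)
    exact ⟨hb2, hb1, hm.symm⟩
  · intro p hp q hq hpq
    have := h2 p.swap (mem_sw.1 hp) q.swap (mem_sw.1 hq)
      (fun h => hpq (by simpa using congrArg Prod.swap h))
    exact ⟨this.2, this.1⟩
  · rw [sw, Finset.sup_image]; exact h4
  · rw [sw, Finset.sup_image]; exact h3

lemma refines_sw {s t : Finset (B × B)} (h : Refines s t) : Refines (sw s) (sw t) := by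
  intro q hq
  obtain ⟨p, hp, h1, h2⟩ := h q.swap (mem_sw.1 hq)
  exact ⟨p.swap, mem_sw.2 (by simpa using hp), h2, h1⟩

lemma spanF_sw_iff {s : Finset (B × B)} {x : B} : SpanF x (sw s) ↔ SpanS x s := by
  constructor
  · intro h q hq
    have := h q.swap (mem_sw.2 (by simpa using hq))
    simpa using this
  · intro h q hq
    exact h q.swap (mem_sw.1 hq)

lemma spanS_sw_iff {s : Finset (B × B)} {x : B} : SpanS x (sw s) ↔ SpanF x s := by
  rw [← spanF_sw_iff, sw_sw]

lemma psiAt_eq_phiAt_sw (s : Finset (B × B)) (y : B) : psiAt s y = phiAt (sw s) y := by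
  rw [phiAt, sw, Finset.filter_image, Finset.sup_image]
  rfl

lemma phiAt_eq_psiAt_sw (s : Finset (B × B)) (y : B) : phiAt s y = psiAt (sw s) y := by
  rw [psiAt_eq_phiAt_sw, sw_sw]

end
end Stmt18

namespace Stmt18
open Finset
open scoped Classical
noncomputable section
variable {B : Type*} [BooleanAlgebra B] {G : Type*} [AddCommGroup G] (lam : B → G)

lemma exists_piece_auto (hlam : IsBAMeasure lam) (hhom : MeasHomogeneous lam)
    {s : Finset (B × B)} (hs : Valid lam s) {p : B × B} (hp : p ∈ s) :
    ∃ φ : B ≃o B, PreservesMeas lam φ ∧ φ p.1 = p.2 := by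
  obtain ⟨h1, h2, h3, h4⟩ := hs
  have hb1 := (h1 p hp).1
  have hb2 := (h1 p hp).2.1
  by_cases ht1 : p.1 = ⊤
  · have hall : ∀ q ∈ s, q = p := by
      intro q hq
      by_contra hne
      have := (h2 q hq p hp hne).1
      rw [ht1] at this
      exact (h1 q hq).1 (disjoint_top.1 this)
    have ht2 : p.2 = ⊤ := by
      refine le_antisymm le_top ?_
      rw [← h4]
      exact Finset.sup_le fun q hq => by rw [hall q hq]
    exact ⟨OrderIso.refl B, fun x => rfl, by rw [ht1, ht2]; rfl⟩
  · have ht2 : p.2 ≠ ⊤ := by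
      intro ht2
      have hall : ∀ q ∈ s, q = p := by
        intro q hq
        by_contra hne
        have := (h2 q hq p hp hne).2
        rw [ht2] at this
        exact (h1 q hq).2.1 (disjoint_top.1 this)
      apply ht1
      refine le_antisymm le_top ?_
      rw [← h3]
      exact Finset.sup_le fun q hq => by rw [hall q hq]
    exact hhom p.1 p.2 ⟨hb1, ht1⟩ ⟨hb2, ht2⟩ (h1 p hp).2.2
      (by rw [meas_compl hlam, meas_compl hlam, (h1 p hp).2.2])

lemma step_fst (hlam : IsBAMeasure lam) (hhom : MeasHomogeneous lam)
    {s : Finset (B × B)} (hs : Valid lam s) (x : B) :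
    ∃ t, Valid lam t ∧ Refines s t ∧ SpanF x t := by
  classical
  have hpiece : ∀ p : {p // p ∈ s}, ∃ φ : B ≃o B, PreservesMeas lam φ ∧ φ p.1.1 = p.1.2 :=
    fun p => exists_piece_auto lam hlam hhom hs p.2
  choose φ hφ1 hφ2 using hpiece
  set parts : {p // p ∈ s} → Finset (B × B) := fun p =>
    ({(p.1.1 ⊓ x, φ p (p.1.1 ⊓ x)), (p.1.1 \ x, φ p (p.1.1 \ x))} : Finset (B × B)).filter
      (fun q => q.1 ≠ ⊥) with hparts
  refine ⟨s.attach.biUnion parts, ?_⟩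
  have hmem : ∀ q : B × B, q ∈ s.attach.biUnion parts ↔ ∃ p : {p // p ∈ s},
      (q = (p.1.1 ⊓ x, φ p (p.1.1 ⊓ x)) ∨ q = (p.1.1 \ x, φ p (p.1.1 \ x))) ∧ q.1 ≠ ⊥ := by
    intro q
    rw [Finset.mem_biUnion]
    constructor
    · rintro ⟨p, -, hq⟩
      rcases Finset.mem_filter.1 hq with ⟨hq1, hq2⟩
      rcases Finset.mem_insert.1 hq1 with h | h
      · exact ⟨p, Or.inl h, hq2⟩
      · exact ⟨p, Or.inr (Finset.mem_singleton.1 h), hq2⟩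
    · rintro ⟨p, hcase, hbot⟩
      refine ⟨p, Finset.mem_attach _ _, Finset.mem_filter.2 ⟨?_, hbot⟩⟩
      rcases hcase with h | h
      · exact Finset.mem_insert.2 (Or.inl h)
      · exact Finset.mem_insert.2 (Or.inr (Finset.mem_singleton.2 h))
  have hfacts : ∀ q ∈ s.attach.biUnion parts, ∃ p : {p // p ∈ s},
      q.1 ≤ p.1.1 ∧ q.2 = φ p q.1 ∧ q.1 ≠ ⊥ ∧ (q.1 ≤ x ∨ Disjoint q.1 x) := by
    intro q hq
    obtain ⟨p, hcase, hbot⟩ := (hmem q).1 hq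
    rcases hcase with h | h
    · exact ⟨p, by rw [h]; exact inf_le_left, by rw [h], hbot,
        Or.inl (by rw [h]; exact inf_le_right)⟩
    · exact ⟨p, by rw [h]; exact sdiff_le, by rw [h], hbot,
        Or.inr (by rw [h]; exact disjoint_sdiff_self_left)⟩
  refine ⟨⟨?_, ?_, ?_, ?_⟩, ?_, ?_⟩
  · -- nonbot and measure
    intro q hq
    obtain ⟨p, hle, hsnd, hbot, -⟩ := hfacts q hq
    refine ⟨hbot, ?_, ?_⟩
    · rw [hsnd]; exact oi_ne_bot (φ p) hbot
    · rw [hsnd]; exact (hφ1 p q.1).symm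
  · -- pairwise disjoint
    intro q hq r hr hqr
    obtain ⟨p, hcase, hbot⟩ := (hmem q).1 hq
    obtain ⟨p', hcase', hbot'⟩ := (hmem r).1 hr
    by_cases hpp : p = p'
    · subst hpp
      have hd1 : Disjoint (p.1.1 ⊓ x) (p.1.1 \ x) := disjoint_iff.2 (inf_inf_sdiff _ _)
      rcases hcase with hc | hc <;> rcases hcase' with hc' | hc'
      · exact absurd (hc.trans hc'.symm) hqr
      · exact ⟨by rw [hc, hc']; exact hd1, by rw [hc, hc']; exact (oi_disjoint_iff (φ p)).2 hd1⟩
      · exact ⟨by rw [hc, hc']; exact hd1.symm,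
          by rw [hc, hc']; exact ((oi_disjoint_iff (φ p)).2 hd1).symm⟩
      · exact absurd (hc.trans hc'.symm) hqr
    · have hne : p.1 ≠ p'.1 := fun h => hpp (Subtype.ext h)
      have hd := hs.2.1 p.1 p.2 p'.1 p'.2 hne
      have hq1 : q.1 ≤ p.1.1 := by rcases hcase with hc | hc <;> rw [hc] <;>
        first | exact inf_le_left | exact sdiff_le
      have hr1 : r.1 ≤ p'.1.1 := by rcases hcase' with hc | hc <;> rw [hc] <;>
        first | exact inf_le_left | exact sdiff_le
      have hq2 : q.2 ≤ p.1.2 := by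
        rw [← hφ2 p]
        rcases hcase with hc | hc <;> rw [hc] <;>
          exact (φ p).monotone (by first | exact inf_le_left | exact sdiff_le)
      have hr2 : r.2 ≤ p'.1.2 := by
        rw [← hφ2 p']
        rcases hcase' with hc | hc <;> rw [hc] <;>
          exact (φ p').monotone (by first | exact inf_le_left | exact sdiff_le)
      exact ⟨hd.1.mono hq1 hr1, hd.2.mono hq2 hr2⟩
  · -- sup fst
    refine le_antisymm le_top ?_
    rw [← hs.2.2.1]
    refine Finset.sup_le fun p hp => ?_
    have hsplit : p.1 = (p.1 ⊓ x) ⊔ (p.1 \ x) := (sup_inf_sdiff p.1 x).symm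
    rw [hsplit]
    apply sup_le
    · by_cases hb : p.1 ⊓ x = ⊥
      · rw [hb]; exact bot_le
      · exact Finset.le_sup (f := Prod.fst) ((hmem (p.1 ⊓ x, φ ⟨p, hp⟩ (p.1 ⊓ x))).2 ⟨⟨p, hp⟩, Or.inl rfl, hb⟩)
    · by_cases hb : p.1 \ x = ⊥
      · rw [hb]; exact bot_le
      · exact Finset.le_sup (f := Prod.fst) ((hmem (p.1 \ x, φ ⟨p, hp⟩ (p.1 \ x))).2 ⟨⟨p, hp⟩, Or.inr rfl, hb⟩)
  · -- sup snd
    refine le_antisymm le_top ?_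
    rw [← hs.2.2.2]
    refine Finset.sup_le fun p hp => ?_
    have hsplit : p.2 = φ ⟨p, hp⟩ (p.1 ⊓ x) ⊔ φ ⟨p, hp⟩ (p.1 \ x) := by
      rw [← OrderIso.map_sup, sup_inf_sdiff]
      exact (hφ2 ⟨p, hp⟩).symm
    rw [hsplit]
    apply sup_le
    · by_cases hb : p.1 ⊓ x = ⊥
      · rw [hb, OrderIso.map_bot]; exact bot_le
      · exact Finset.le_sup (f := Prod.snd) ((hmem (p.1 ⊓ x, φ ⟨p, hp⟩ (p.1 ⊓ x))).2 ⟨⟨p, hp⟩, Or.inl rfl, hb⟩)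
    · by_cases hb : p.1 \ x = ⊥
      · rw [hb, OrderIso.map_bot]; exact bot_le
      · exact Finset.le_sup (f := Prod.snd) ((hmem (p.1 \ x, φ ⟨p, hp⟩ (p.1 \ x))).2 ⟨⟨p, hp⟩, Or.inr rfl, hb⟩)
  · -- refines
    intro q hq
    obtain ⟨p, hle, hsnd, hbot, -⟩ := hfacts q hq
    refine ⟨p.1, p.2, hle, ?_⟩
    rw [hsnd, ← hφ2 p]
    exact (φ p).monotone hle
  · -- spanF
    intro q hq
    obtain ⟨p, -, -, -, hsp⟩ := hfacts q hq
    exact hsp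


lemma step_snd (hlam : IsBAMeasure lam) (hhom : MeasHomogeneous lam)
    {s : Finset (B × B)} (hs : Valid lam s) (x : B) :
    ∃ t, Valid lam t ∧ Refines s t ∧ SpanS x t := by
  obtain ⟨t', ht1, ht2, ht3⟩ := step_fst lam hlam hhom (valid_sw lam hs) x
  refine ⟨sw t', ?_, ?_, ?_⟩
  · exact valid_sw lam ht1
  · have := refines_sw (s := sw s) (t := t') ht2
    rwa [sw_sw] at this
  · rw [← spanF_sw_iff, sw_sw]
    exact ht3

lemma refines_refl (s : Finset (B × B)) : Refines s s := fun q hq => ⟨q, hq, le_rfl, le_rfl⟩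

lemma refines_trans {s t u : Finset (B × B)} (h1 : Refines s t) (h2 : Refines t u) :
    Refines s u := by
  intro q hq
  obtain ⟨p, hp, hp1, hp2⟩ := h2 q hq
  obtain ⟨r, hr, hr1, hr2⟩ := h1 p hp
  exact ⟨r, hr, hp1.trans hr1, hp2.trans hr2⟩

lemma spanF_of_refines {s t : Finset (B × B)} {x : B} (hx : SpanF x s) (h : Refines s t) :
    SpanF x t := by
  intro q hq
  obtain ⟨p, hp, h1, -⟩ := h q hq
  rcases hx p hp with hle | hd
  · exact Or.inl (h1.trans hle)
  · exact Or.inr (hd.mono_left h1)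

lemma spanS_of_refines {s t : Finset (B × B)} {y : B} (hy : SpanS y s) (h : Refines s t) :
    SpanS y t := by
  intro q hq
  obtain ⟨p, hp, -, h2⟩ := h q hq
  rcases hy p hp with hle | hd
  · exact Or.inl (h2.trans hle)
  · exact Or.inr (hd.mono_left h2)

lemma step_both (hlam : IsBAMeasure lam) (hhom : MeasHomogeneous lam)
    {s : Finset (B × B)} (hs : Valid lam s) (x : B) :
    ∃ t, Valid lam t ∧ Refines s t ∧ SpanF x t ∧ SpanS x t := by
  obtain ⟨t1, h11, h12, h13⟩ := step_fst lam hlam hhom hs x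
  obtain ⟨t2, h21, h22, h23⟩ := step_snd lam hlam hhom h11 x
  exact ⟨t2, h21, refines_trans h12 h22, spanF_of_refines h13 h22, h23⟩

/-- key stage-independence lemma -/
lemma phiAt_refines (hlam : IsBAMeasure lam) {s t : Finset (B × B)}
    (hs : Valid lam s) (ht : Valid lam t) (hr : Refines s t) {x : B} (hx : SpanF x s) :
    phiAt t x = phiAt s x := by
  classical
  apply le_antisymm
  · refine Finset.sup_le fun q hq => ?_
    obtain ⟨hq', hqx⟩ := Finset.mem_filter.1 hq
    obtain ⟨p, hp, h1, h2⟩ := hr q hq'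
    have hpx : p.1 ≤ x := by
      rcases hx p hp with hle | hd
      · exact hle
      · exact absurd (le_bot_iff.1 (hd h1 hqx)) (ht.1 q hq').1
    exact le_trans h2 (Finset.le_sup (f := Prod.snd) (Finset.mem_filter.2 ⟨hp, hpx⟩))
  · refine Finset.sup_le fun p hp => ?_
    obtain ⟨hp', hpx⟩ := Finset.mem_filter.1 hp
    have : p.2 = p.2 ⊓ t.sup Prod.snd := by rw [ht.2.2.2, inf_top_eq]
    rw [this, Finset.sup_inf_distrib_left]
    refine Finset.sup_le fun q hq => ?_
    obtain ⟨r, hr', h1, h2⟩ := hr q hq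
    by_cases hrp : r = p
    · subst hrp
      have hq1x : q.1 ≤ x := h1.trans hpx
      exact le_trans inf_le_right
        (Finset.le_sup (f := Prod.snd) (Finset.mem_filter.2 ⟨hq, hq1x⟩))
    · have hd : Disjoint r.2 p.2 := (hs.2.1 r hr' p hp' hrp).2
      have : p.2 ⊓ q.2 = ⊥ := le_bot_iff.1 ((hd.symm.mono_right h2) inf_le_left inf_le_right)
      rw [this]
      exact bot_le

lemma psiAt_refines (hlam : IsBAMeasure lam) {s t : Finset (B × B)}
    (hs : Valid lam s) (ht : Valid lam t) (hr : Refines s t) {y : B} (hy : SpanS y s) :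
    psiAt t y = psiAt s y := by
  rw [psiAt_eq_phiAt_sw, psiAt_eq_phiAt_sw]
  exact phiAt_refines lam hlam (valid_sw lam hs) (valid_sw lam ht) (refines_sw hr)
    (spanF_sw_iff.2 hy)

lemma spanF_sup_eq {s : Finset (B × B)} (hs : Valid lam s) {x : B} (hx : SpanF x s) :
    (s.filter (fun p => p.1 ≤ x)).sup Prod.fst = x := by
  classical
  apply le_antisymm
  · exact Finset.sup_le fun q hq => (Finset.mem_filter.1 hq).2
  · calc x = x ⊓ s.sup Prod.fst := by rw [hs.2.2.1, inf_top_eq]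
      _ = s.sup (fun q => x ⊓ q.1) := Finset.sup_inf_distrib_left s Prod.fst x
      _ ≤ (s.filter (fun p => p.1 ≤ x)).sup Prod.fst := by
          refine Finset.sup_le fun q hq => ?_
          rcases hx q hq with hle | hd
          · exact le_trans inf_le_right
              (Finset.le_sup (f := Prod.fst) (Finset.mem_filter.2 ⟨hq, hle⟩))
          · exact le_trans (hd.symm inf_le_left inf_le_right) bot_le

lemma spanS_phiAt {s : Finset (B × B)} (hs : Valid lam s) {x : B} (hx : SpanF x s) :
    SpanS (phiAt s x) s := by
  classical
  intro q hq
  rcases hx q hq with hle | hd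
  · exact Or.inl (Finset.le_sup (f := Prod.snd) (Finset.mem_filter.2 ⟨hq, hle⟩))
  · refine Or.inr ?_
    rw [phiAt, Finset.disjoint_sup_right]
    intro p hp
    obtain ⟨hp', hpx⟩ := Finset.mem_filter.1 hp
    have hqp : q ≠ p := by
      rintro rfl
      exact (hs.1 q hq).1 (le_bot_iff.1 (hd (le_refl q.1) hpx))
    exact (hs.2.1 q hq p hp' hqp).2

lemma psiAt_phiAt {s : Finset (B × B)} (hs : Valid lam s) {x : B} (hx : SpanF x s) :
    psiAt s (phiAt s x) = x := by
  classical
  have hfilter : s.filter (fun p => p.2 ≤ phiAt s x) = s.filter (fun p => p.1 ≤ x) := by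
    ext q
    simp only [Finset.mem_filter]
    constructor
    · rintro ⟨hq, hq2⟩
      refine ⟨hq, ?_⟩
      rcases hx q hq with hle | hd
      · exact hle
      · -- q.2 ≤ phiAt s x but q.2 disjoint from phiAt s x pieces
        exfalso
        have hdis : Disjoint q.2 (phiAt s x) := by
          rw [phiAt, Finset.disjoint_sup_right]
          intro p hp
          obtain ⟨hp', hpx⟩ := Finset.mem_filter.1 hp
          have hqp : q ≠ p := by
            rintro rfl
            exact (hs.1 q hq).1 (le_bot_iff.1 (hd (le_refl q.1) hpx))
          exact (hs.2.1 q hq p hp' hqp).2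
        exact (hs.1 q hq).2.1 (le_bot_iff.1 (hdis (le_refl q.2) hq2))
    · rintro ⟨hq, hq1⟩
      exact ⟨hq, Finset.le_sup (f := Prod.snd) (Finset.mem_filter.2 ⟨hq, hq1⟩)⟩
  rw [psiAt, hfilter]
  exact spanF_sup_eq lam hs hx

lemma spanF_psiAt {s : Finset (B × B)} (hs : Valid lam s) {y : B} (hy : SpanS y s) :
    SpanF (psiAt s y) s := by
  have := spanS_phiAt lam (valid_sw lam hs) (spanF_sw_iff.2 hy)
  rw [← psiAt_eq_phiAt_sw] at this
  rw [← spanS_sw_iff]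
  exact this

lemma phiAt_psiAt {s : Finset (B × B)} (hs : Valid lam s) {y : B} (hy : SpanS y s) :
    phiAt s (psiAt s y) = y := by
  have := psiAt_phiAt lam (valid_sw lam hs) (spanF_sw_iff.2 hy)
  rw [← psiAt_eq_phiAt_sw, ← phiAt_eq_psiAt_sw] at this
  exact this

lemma lam_phiAt (hlam : IsBAMeasure lam) {s : Finset (B × B)} (hs : Valid lam s)
    {x : B} (hx : SpanF x s) : lam (phiAt s x) = lam x := by
  classical
  have hd1 : ∀ p ∈ s.filter (fun p => p.1 ≤ x), ∀ q ∈ s.filter (fun p => p.1 ≤ x),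
      p ≠ q → Disjoint (Prod.fst p) (Prod.fst q) := fun p hp q hq hpq =>
    (hs.2.1 p (Finset.mem_filter.1 hp).1 q (Finset.mem_filter.1 hq).1 hpq).1
  have hd2 : ∀ p ∈ s.filter (fun p => p.1 ≤ x), ∀ q ∈ s.filter (fun p => p.1 ≤ x),
      p ≠ q → Disjoint (Prod.snd p) (Prod.snd q) := fun p hp q hq hpq =>
    (hs.2.1 p (Finset.mem_filter.1 hp).1 q (Finset.mem_filter.1 hq).1 hpq).2
  have h1 : lam (phiAt s x) = ∑ p ∈ s.filter (fun p => p.1 ≤ x), lam p.2 :=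
    meas_finset_sup hlam _ _ hd2
  have h2 : lam x = ∑ p ∈ s.filter (fun p => p.1 ≤ x), lam p.1 := by
    conv_lhs => rw [← spanF_sup_eq lam hs hx]
    exact meas_finset_sup hlam _ _ hd1
  rw [h1, h2]
  apply Finset.sum_congr rfl
  intro p hp
  exact ((hs.1 p (Finset.mem_filter.1 hp).1).2.2).symm

lemma phiAt_mono {s : Finset (B × B)} {x y : B} (h : x ≤ y) : phiAt s x ≤ phiAt s y := by
  classical
  refine Finset.sup_mono fun p hp => Finset.mem_filter.2
    ⟨(Finset.mem_filter.1 hp).1, le_trans (Finset.mem_filter.1 hp).2 h⟩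

lemma psiAt_mono {s : Finset (B × B)} {x y : B} (h : x ≤ y) : psiAt s x ≤ psiAt s y := by
  classical
  refine Finset.sup_mono fun p hp => Finset.mem_filter.2
    ⟨(Finset.mem_filter.1 hp).1, le_trans (Finset.mem_filter.1 hp).2 h⟩


theorem exists_auto [Countable B] (hlam : IsBAMeasure lam) (hhom : MeasHomogeneous lam)
    {s₀ : Finset (B × B)} (hs₀ : Valid lam s₀) :
    ∃ φ : B ≃o B, PreservesMeas lam φ ∧ ∀ p ∈ s₀, φ p.1 = p.2 := by
  classical
  obtain ⟨f, hf⟩ := exists_surjective_nat B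
  have hstep : ∀ sv : {s : Finset (B × B) // Valid lam s}, ∀ x : B,
      ∃ t, Valid lam t ∧ Refines sv.1 t ∧ SpanF x t ∧ SpanS x t :=
    fun sv x => step_both lam hlam hhom sv.2 x
  let next : {s : Finset (B × B) // Valid lam s} → ℕ → {s : Finset (B × B) // Valid lam s} :=
    fun sv k => ⟨(hstep sv (f k)).choose, (hstep sv (f k)).choose_spec.1⟩
  let T : ℕ → {s : Finset (B × B) // Valid lam s} :=
    fun n => Nat.rec ⟨s₀, hs₀⟩ (fun k ih => next ih k) n
  set S : ℕ → Finset (B × B) := fun n => (T n).1 with hS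
  have hSv : ∀ n, Valid lam (S n) := fun n => (T n).2
  have hS0 : S 0 = s₀ := rfl
  have hSstep : ∀ k, Refines (S k) (S (k + 1)) ∧ SpanF (f k) (S (k + 1)) ∧
      SpanS (f k) (S (k + 1)) := by
    intro k
    have h := (hstep (T k) (f k)).choose_spec
    exact ⟨h.2.1, h.2.2.1, h.2.2.2⟩
  have hchain : ∀ k m, k ≤ m → Refines (S k) (S m) := by
    intro k m hkm
    induction m, hkm using Nat.le_induction with
    | base => exact refines_refl _
    | succ m hkm ih => exact refines_trans ih (hSstep m).1
  -- stages
  have hidx : ∀ x : B, ∃ n : ℕ, f n = x := hf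
  let idx : B → ℕ := fun x => (hidx x).choose
  have hidx' : ∀ x, f (idx x) = x := fun x => (hidx x).choose_spec
  have hspanF : ∀ x, SpanF x (S (idx x + 1)) := by
    intro x
    have := (hSstep (idx x)).2.1
    rwa [hidx' x] at this
  have hspanS : ∀ x, SpanS x (S (idx x + 1)) := by
    intro x
    have := (hSstep (idx x)).2.2
    rwa [hidx' x] at this
  let Φ : B → B := fun x => phiAt (S (idx x + 1)) x
  let Ψ : B → B := fun y => psiAt (S (idx y + 1)) y
  have hΦeq : ∀ x k, SpanF x (S k) → Φ x = phiAt (S k) x := by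
    intro x k hk
    have h1 : phiAt (S (max k (idx x + 1))) x = phiAt (S k) x :=
      phiAt_refines lam hlam (hSv k) (hSv _) (hchain _ _ (le_max_left _ _)) hk
    have h2 : phiAt (S (max k (idx x + 1))) x = phiAt (S (idx x + 1)) x :=
      phiAt_refines lam hlam (hSv _) (hSv _) (hchain _ _ (le_max_right _ _)) (hspanF x)
    rw [show Φ x = phiAt (S (idx x + 1)) x from rfl, ← h2, h1]
  have hΨeq : ∀ y k, SpanS y (S k) → Ψ y = psiAt (S k) y := by
    intro y k hk
    have h1 : psiAt (S (max k (idx y + 1))) y = psiAt (S k) y :=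
      psiAt_refines lam hlam (hSv k) (hSv _) (hchain _ _ (le_max_left _ _)) hk
    have h2 : psiAt (S (max k (idx y + 1))) y = psiAt (S (idx y + 1)) y :=
      psiAt_refines lam hlam (hSv _) (hSv _) (hchain _ _ (le_max_right _ _)) (hspanS y)
    rw [show Ψ y = psiAt (S (idx y + 1)) y from rfl, ← h2, h1]
  -- left and right inverse
  have hleft : ∀ x, Ψ (Φ x) = x := by
    intro x
    set k := max (idx x + 1) (idx (Φ x) + 1) with hk
    have hxk : SpanF x (S k) :=
      spanF_of_refines (hspanF x) (hchain _ _ (le_max_left _ _))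
    have hΦx : Φ x = phiAt (S k) x := hΦeq x k hxk
    have hSk : SpanS (Φ x) (S k) := by
      rw [hΦx]
      exact spanS_phiAt lam (hSv k) hxk
    rw [hΨeq (Φ x) k hSk, hΦx]
    exact psiAt_phiAt lam (hSv k) hxk
  have hright : ∀ y, Φ (Ψ y) = y := by
    intro y
    set k := max (idx y + 1) (idx (Ψ y) + 1) with hk
    have hyk : SpanS y (S k) :=
      spanS_of_refines (hspanS y) (hchain _ _ (le_max_left _ _))
    have hΨy : Ψ y = psiAt (S k) y := hΨeq y k hyk
    have hSk : SpanF (Ψ y) (S k) := by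
      rw [hΨy]
      exact spanF_psiAt lam (hSv k) hyk
    rw [hΦeq (Ψ y) k hSk, hΨy]
    exact phiAt_psiAt lam (hSv k) hyk
  -- monotonicity
  have hmonoΦ : ∀ x y, x ≤ y → Φ x ≤ Φ y := by
    intro x y hxy
    set k := max (idx x + 1) (idx y + 1) with hk
    have hxk : SpanF x (S k) := spanF_of_refines (hspanF x) (hchain _ _ (le_max_left _ _))
    have hyk : SpanF y (S k) := spanF_of_refines (hspanF y) (hchain _ _ (le_max_right _ _))
    rw [hΦeq x k hxk, hΦeq y k hyk]
    exact phiAt_mono hxy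
  have hmonoΨ : ∀ x y, x ≤ y → Ψ x ≤ Ψ y := by
    intro x y hxy
    set k := max (idx x + 1) (idx y + 1) with hk
    have hxk : SpanS x (S k) := spanS_of_refines (hspanS x) (hchain _ _ (le_max_left _ _))
    have hyk : SpanS y (S k) := spanS_of_refines (hspanS y) (hchain _ _ (le_max_right _ _))
    rw [hΨeq x k hxk, hΨeq y k hyk]
    exact psiAt_mono hxy
  let e : B ≃ B := ⟨Φ, Ψ, hleft, hright⟩
  let φiso : B ≃o B :=
    { toEquiv := e
      map_rel_iff' := by
        intro a b
        constructor
        · intro h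
          have := hmonoΨ _ _ h
          rwa [show e a = Φ a from rfl, show e b = Φ b from rfl, hleft a, hleft b] at this
        · exact fun h => hmonoΦ a b h }
  refine ⟨φiso, ?_, ?_⟩
  · intro x
    show lam (Φ x) = lam x
    rw [hΦeq x (idx x + 1) (hspanF x)]
    exact lam_phiAt lam hlam (hSv (idx x + 1)) (hspanF x)
  · intro p hp
    show Φ p.1 = p.2
    have hsp : SpanF p.1 (S 0) := by
      intro q hq
      rw [hS0] at hq
      by_cases hqp : q = p
      · subst hqp; exact Or.inl le_rfl
      · exact Or.inr (hs₀.2.1 q hq p hp hqp).1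
    rw [hΦeq p.1 0 hsp]
    have hfilter : (S 0).filter (fun q => q.1 ≤ p.1) = {p} := by
      ext q
      simp only [Finset.mem_filter, Finset.mem_singleton]
      constructor
      · rintro ⟨hq, hle⟩
        rw [hS0] at hq
        by_contra hqp
        exact (hs₀.1 q hq).1 (le_bot_iff.1 ((hs₀.2.1 q hq p hp hqp).1 le_rfl hle))
      · rintro rfl
        exact ⟨by rw [hS0]; exact hp, le_rfl⟩
    rw [phiAt, hfilter, Finset.sup_singleton]


lemma oi_map_finset_sup (φ : B ≃o B) {ι : Type*} (t : Finset ι) (g : ι → B) :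
    φ (t.sup g) = t.sup (fun i => φ (g i)) := by
  classical
  induction t using Finset.induction_on with
  | empty => simpa using φ.map_bot
  | @insert a s ha ih => rw [Finset.sup_insert, Finset.sup_insert, OrderIso.map_sup, ih]

lemma exists_cycle [Countable B] (hlam : IsBAMeasure lam) (hhom : MeasHomogeneous lam)
    {N : ℕ} [NeZero N] {b : Fin N → B} {c : G}
    (hne : ∀ i, b i ≠ ⊥) (hdisj : ∀ i k : Fin N, i ≠ k → Disjoint (b i) (b k))
    (hsup : Finset.univ.sup b = ⊤) (hmeas : ∀ i, lam (b i) = c) :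
    ∃ g : B ≃o B, PreservesMeas lam g ∧ ∀ i, g (b i) = b (i + 1) := by
  classical
  set s₀ : Finset (B × B) := Finset.univ.image (fun i : Fin N => (b i, b (i + 1))) with hs
  have hmem : ∀ i : Fin N, (b i, b (i + 1)) ∈ s₀ :=
    fun i => Finset.mem_image.2 ⟨i, Finset.mem_univ i, rfl⟩
  have hvalid : Valid lam s₀ := by
    refine ⟨?_, ?_, ?_, ?_⟩
    · intro p hp
      obtain ⟨i, -, rfl⟩ := Finset.mem_image.1 hp
      exact ⟨hne i, hne (i + 1), (hmeas i).trans (hmeas (i + 1)).symm⟩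
    · intro p hp q hq hpq
      obtain ⟨i, -, rfl⟩ := Finset.mem_image.1 hp
      obtain ⟨j, -, rfl⟩ := Finset.mem_image.1 hq
      have hij : i ≠ j := by rintro rfl; exact hpq rfl
      exact ⟨hdisj i j hij, hdisj (i + 1) (j + 1) (fun h => hij (add_right_cancel h))⟩
    · rw [hs, Finset.sup_image]
      exact hsup
    · refine le_antisymm le_top ?_
      rw [← hsup]
      refine Finset.sup_le fun i _ => ?_
      have h1 : b i = b ((i - 1) + 1) := by rw [sub_add_cancel]
      rw [h1]
      exact Finset.le_sup (f := Prod.snd) (hmem (i - 1))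
  obtain ⟨φ, hp, hmap⟩ := exists_auto lam hlam hhom hvalid
  exact ⟨φ, hp, fun i => hmap _ (hmem i)⟩

end
end Stmt18

open Stmt18 in
/-- if a group-valued homogeneous measure has the Rokhlin
property and `⊤` admits two equi-measured `N`-partitions (`N > 1`) with common
measures `α` and `β`, then `α = β`. -/
theorem common_measure_unique {G : Type*} [AddCommGroup G]
    [Countable B] [Nontrivial B]
    (hatomless : ∀ a : B, a ≠ ⊥ → ∃ b : B, b ≠ ⊥ ∧ b < a)
    (lam : B → G) (hlam : IsBAMeasure lam) (hhom : MeasHomogeneous lam)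
    (hR : RokhlinProperty lam) {N : ℕ} (hN : 1 < N) (α β : G)
    (hα : AdmitsEquiPartitionWith lam N ⊤ α)
    (hβ : AdmitsEquiPartitionWith lam N ⊤ β) :
    α = β := by
  classical
  haveI : NeZero N := ⟨by omega⟩
  obtain ⟨b, hbne, hbdisj, hbsup, hbmeas⟩ := hα
  obtain ⟨c, hcne, hcdisj, hcsup, hcmeas⟩ := hβ
  obtain ⟨gα, hgα, hgαc⟩ := exists_cycle lam hlam hhom hbne hbdisj hbsup hbmeas
  obtain ⟨gβ, hgβ, hgβc⟩ := exists_cycle lam hlam hhom hcne hcdisj hcsup hcmeas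
  obtain ⟨h, hh, hdense⟩ := hR
  obtain ⟨u, hu, hu2⟩ := hdense gα hgα (Finset.univ.image b)
  obtain ⟨v, hv, hv2⟩ := hdense gβ hgβ (Finset.univ.image c)
  set d : Fin N → B := fun i => u.symm (b i) with hdd
  set e : Fin N → B := fun j => v.symm (c j) with hee
  have hd : ∀ i, h (d i) = d (i + 1) := by
    intro i
    have h1 := (hu2 (b i) (Finset.mem_image.2 ⟨i, Finset.mem_univ i, rfl⟩)).1
    rw [hgαc i] at h1
    have h2 := congrArg u.symm h1
    rwa [u.symm_apply_apply] at h2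
  have he : ∀ j, h (e j) = e (j + 1) := by
    intro j
    have h1 := (hv2 (c j) (Finset.mem_image.2 ⟨j, Finset.mem_univ j, rfl⟩)).1
    rw [hgβc j] at h1
    have h2 := congrArg v.symm h1
    rwa [v.symm_apply_apply] at h2
  have hdm : ∀ i, lam (d i) = α := fun i => (pres_symm hu (b i)).trans (hbmeas i)
  have hem : ∀ j, lam (e j) = β := fun j => (pres_symm hv (c j)).trans (hcmeas j)
  have hddisj : ∀ i k : Fin N, i ≠ k → Disjoint (d i) (d k) :=
    fun i k hik => (oi_disjoint_iff u.symm).2 (hbdisj i k hik)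
  have hedisj : ∀ i k : Fin N, i ≠ k → Disjoint (e i) (e k) :=
    fun i k hik => (oi_disjoint_iff v.symm).2 (hcdisj i k hik)
  have hdsup : Finset.univ.sup d = ⊤ := by
    rw [hdd, show (fun i => u.symm (b i)) = fun i => u.symm (b i) from rfl]
    rw [← oi_map_finset_sup u.symm Finset.univ b, hbsup]
    exact u.symm.map_top
  have hesup : Finset.univ.sup e = ⊤ := by
    rw [hee, ← oi_map_finset_sup v.symm Finset.univ c, hcsup]
    exact v.symm.map_top
  set m : Fin N → Fin N → G := fun i j => lam (d i ⊓ e j) with hm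
  have hstep : ∀ i j, m i j = m (i + 1) (j + 1) := by
    intro i j
    have h1 : h (d i ⊓ e j) = d (i + 1) ⊓ e (j + 1) := by
      rw [OrderIso.map_inf, hd, he]
    calc m i j = lam (d i ⊓ e j) := rfl
      _ = lam (h (d i ⊓ e j)) := (hh _).symm
      _ = lam (d (i + 1) ⊓ e (j + 1)) := by rw [h1]
  open Fin.NatCast in
  have hshift : ∀ (k : ℕ), ∀ i j, m i j = m (i + (k : Fin N)) (j + (k : Fin N)) := by
    intro k
    induction k with
    | zero => intro i j; simp
    | succ k ih =>
      intro i j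
      calc m i j = m (i + (k : Fin N)) (j + (k : Fin N)) := ih i j
        _ = m (i + (k : Fin N) + 1) (j + (k : Fin N) + 1) := hstep _ _
        _ = m (i + ((k : Fin N) + 1)) (j + ((k : Fin N) + 1)) := by rw [add_assoc, add_assoc]
        _ = m (i + ((k + 1 : ℕ) : Fin N)) (j + ((k + 1 : ℕ) : Fin N)) := by
            rw [Nat.cast_add_one]
  open Fin.NatCast in
  have hshift' : ∀ (t : Fin N), ∀ i j, m i j = m (i + t) (j + t) := by
    intro t i j
    have := hshift t.val i j
    rwa [Fin.cast_val_eq_self] at this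
  have hsum1 : α = ∑ j : Fin N, m 0 j := by
    have h1 : d 0 = Finset.univ.sup (fun j => d 0 ⊓ e j) := by
      rw [← Finset.sup_inf_distrib_left, hesup, inf_top_eq]
    calc α = lam (d 0) := (hdm 0).symm
      _ = lam (Finset.univ.sup (fun j => d 0 ⊓ e j)) := by rw [← h1]
      _ = ∑ j : Fin N, m 0 j := meas_finset_sup hlam _ _
          (fun i _ j _ hij => ((hedisj i j hij).mono inf_le_right inf_le_right))
  have hsum2 : β = ∑ i : Fin N, m i 1 := by
    have h1 : e 1 = Finset.univ.sup (fun i => e 1 ⊓ d i) := by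
      rw [← Finset.sup_inf_distrib_left, hdsup, inf_top_eq]
    calc β = lam (e 1) := (hem 1).symm
      _ = lam (Finset.univ.sup (fun i => e 1 ⊓ d i)) := by rw [← h1]
      _ = ∑ i : Fin N, lam (e 1 ⊓ d i) := meas_finset_sup hlam _ _
          (fun i _ j _ hij => ((hddisj i j hij).mono inf_le_right inf_le_right))
      _ = ∑ i : Fin N, m i 1 := by
          refine Finset.sum_congr rfl fun i _ => ?_
          rw [hm]
          rw [inf_comm]
  have hmain : ∑ j : Fin N, m 0 j = ∑ i : Fin N, m i 1 := by
    have h1 : ∀ j : Fin N, m 0 j = m (1 - j) 1 := by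
      intro j
      have h2 := hshift' (1 - j) 0 j
      have h3 : (0 : Fin N) + (1 - j) = 1 - j := zero_add _
      have h4 : j + (1 - j) = 1 := by abel
      rwa [h3, h4] at h2
    calc ∑ j : Fin N, m 0 j = ∑ j : Fin N, m (1 - j) 1 :=
        Finset.sum_congr rfl fun j _ => h1 j
      _ = ∑ i : Fin N, m i 1 := Equiv.sum_comp (Equiv.subLeft 1) (fun i => m i 1)
  rw [hsum1, hsum2, hmain]
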